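/- For a real parameter η, let g(ρ) = 1024(η − 3)ρ³ + (−704η² + 1920η + 768)ρ² + η(196η² − 732η + 288)ρ + 27η², regarded as a polynomial in ρ, and let η̄ = 135/98 + (19/98)√57 (the positive root of 49η² − 135η − 12). Then: (1) for η ∈ (0, η̄) with η ≠ 12/5, g has exactly one real root, and this root is strictly positive; (2) for η ∈ (η̄, 3) and for η = 12/5, g has three real roots counted with multiplicity (with a double root exactly when η = 12/5 or η = 20/7), all strictly positive; (3) for η = η̄, g has exactly one simple real root and one double real root, both strictly positive. -/

import Mathlib

open Polynomial Complex

noncomputable section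


private lemma cubic_map_ne_zero {P : Cubic ℝ} (ha : P.a ≠ 0) :
    (Cubic.map (algebraMap ℝ ℂ) P).toPoly ≠ 0 :=
  Cubic.ne_zero_of_a_ne_zero (by
    show (algebraMap ℝ ℂ) P.a ≠ 0
    simpa using ha)

private lemma real_root_mem {P : Cubic ℝ} (ha : P.a ≠ 0) {s : ℝ} (hs : P.toPoly.IsRoot s) :
    (s : ℂ) ∈ (Cubic.map (algebraMap ℝ ℂ) P).roots := by
  rw [Cubic.mem_roots_iff (cubic_map_ne_zero ha)]
  have h1 : P.a * s ^ 3 + P.b * s ^ 2 + P.c * s + P.d = 0 := by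
    have := hs
    simp only [Cubic.toPoly, Polynomial.IsRoot, eval_add, eval_mul, eval_pow, eval_C, eval_X] at this
    linarith
  show (algebraMap ℝ ℂ) P.a * _ + (algebraMap ℝ ℂ) P.b * _ + (algebraMap ℝ ℂ) P.c * _ +
    (algebraMap ℝ ℂ) P.d = 0
  simp only [Complex.coe_algebraMap]
  exact_mod_cast congrArg (Complex.ofReal) h1

private lemma real_root_of_mem {P : Cubic ℝ} (ha : P.a ≠ 0) {s : ℝ}
    (hs : (s : ℂ) ∈ (Cubic.map (algebraMap ℝ ℂ) P).roots) : P.toPoly.IsRoot s := by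
  rw [Cubic.mem_roots_iff (cubic_map_ne_zero ha)] at hs
  have h1 : (algebraMap ℝ ℂ) P.a * (s:ℂ) ^ 3 + (algebraMap ℝ ℂ) P.b * (s:ℂ) ^ 2 +
      (algebraMap ℝ ℂ) P.c * (s:ℂ) + (algebraMap ℝ ℂ) P.d = 0 := hs
  simp only [Complex.coe_algebraMap] at h1
  have h2 : P.a * s ^ 3 + P.b * s ^ 2 + P.c * s + P.d = 0 := by exact_mod_cast h1
  simp only [Cubic.toPoly, Polynomial.IsRoot, eval_add, eval_mul, eval_pow, eval_C, eval_X]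
  linarith

private lemma conj_root_mem {P : Cubic ℝ} (ha : P.a ≠ 0) {w : ℂ}
    (hw : w ∈ (Cubic.map (algebraMap ℝ ℂ) P).roots) :
    (starRingEnd ℂ) w ∈ (Cubic.map (algebraMap ℝ ℂ) P).roots := by
  rw [Cubic.mem_roots_iff (cubic_map_ne_zero ha)] at hw ⊢
  have h1 : (algebraMap ℝ ℂ) P.a * w ^ 3 + (algebraMap ℝ ℂ) P.b * w ^ 2 +
      (algebraMap ℝ ℂ) P.c * w + (algebraMap ℝ ℂ) P.d = 0 := hw
  have h2 := congrArg (starRingEnd ℂ) h1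
  simp only [map_add, map_mul, map_pow, map_zero, Complex.coe_algebraMap,
    Complex.conj_ofReal] at h1 h2 ⊢
  exact h2

private lemma third_root_real {P : Cubic ℝ} (ha : P.a ≠ 0) {s t : ℝ} {w : ℂ}
    (h3 : (Cubic.map (algebraMap ℝ ℂ) P).roots = {(s : ℂ), (t : ℂ), w}) :
    w = ((-P.b / P.a - s - t : ℝ) : ℂ) := by
  have hb := Cubic.b_eq_three_roots ha h3
  simp only [Complex.coe_algebraMap] at hb
  have haC : (P.a : ℂ) ≠ 0 := Complex.ofReal_ne_zero.mpr ha
  push_cast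
  field_simp
  linear_combination hb

private lemma disc_sq_of_real_roots {P : Cubic ℝ} (ha : P.a ≠ 0) {s t u : ℝ}
    (h3 : (Cubic.map (algebraMap ℝ ℂ) P).roots = {(s : ℂ), (t : ℂ), (u : ℂ)}) :
    P.discr = (P.a * P.a * (s - t) * (s - u) * (t - u)) ^ 2 := by
  have hd := Cubic.discr_eq_prod_three_roots ha h3
  simp only [Complex.coe_algebraMap] at hd
  have : ((P.discr : ℝ) : ℂ) = (((P.a * P.a * (s - t) * (s - u) * (t - u)) ^ 2 : ℝ) : ℂ) := by
    rw [hd]; push_cast; ring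
  exact_mod_cast this

private lemma cubic_disc_neg_unique {P : Cubic ℝ} (ha : P.a ≠ 0) (hd : P.discr < 0)
    {s t : ℝ} (hs : P.toPoly.IsRoot s) (ht : P.toPoly.IsRoot t) : s = t := by
  by_contra hst
  obtain ⟨x, y, z, h3⟩ := (Cubic.splits_iff_roots_eq_three (φ := algebraMap ℝ ℂ) ha).mp
    (IsAlgClosed.splits _)
  have hsm : (s : ℂ) ∈ (Cubic.map (algebraMap ℝ ℂ) P).roots := real_root_mem ha hs
  have htm : (t : ℂ) ∈ (Cubic.map (algebraMap ℝ ℂ) P).roots := real_root_mem ha ht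
  have hstC : (t : ℂ) ≠ (s : ℂ) := by exact_mod_cast Ne.symm hst
  set m : Multiset ℂ := (Cubic.map (algebraMap ℝ ℂ) P).roots with hm
  have h1 : (t : ℂ) ∈ m.erase (s : ℂ) := (Multiset.mem_erase_of_ne hstC).mpr htm
  have h2 : m = (s : ℂ) ::ₘ m.erase (s : ℂ) := (Multiset.cons_erase hsm).symm
  have h4 : m.erase (s : ℂ) = (t : ℂ) ::ₘ (m.erase (s : ℂ)).erase (t : ℂ) :=
    (Multiset.cons_erase h1).symm
  have hcard : Multiset.card m = 3 := by rw [h3]; rfl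
  have hcard2 : Multiset.card ((m.erase (s : ℂ)).erase (t : ℂ)) = 1 := by
    have e1 : Multiset.card (m.erase (s : ℂ)) = 2 := by
      have := congrArg Multiset.card h2
      simp only [Multiset.card_cons] at this
      omega
    have := congrArg Multiset.card h4
    simp only [Multiset.card_cons] at this
    omega
  obtain ⟨w, hw⟩ := Multiset.card_eq_one.mp hcard2
  have h3' : (Cubic.map (algebraMap ℝ ℂ) P).roots = {(s : ℂ), (t : ℂ), w} := by
    rw [← hm, h2, h4, hw]; rfl
  have hwu := third_root_real ha h3'
  rw [hwu] at h3'
  have := disc_sq_of_real_roots ha h3'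
  nlinarith [sq_nonneg (P.a * P.a * (s - t) * (s - (-P.b / P.a - s - t)) *
    (t - (-P.b / P.a - s - t)))]




private lemma disc_nonpos_of_conj {P : Cubic ℝ} (ha : P.a ≠ 0) {x y z : ℂ}
    (h3 : (Cubic.map (algebraMap ℝ ℂ) P).roots = {x, y, z})
    (hy : y = (starRingEnd ℂ) x) : P.discr ≤ 0 := by
  have hb := Cubic.b_eq_three_roots ha h3
  simp only [Complex.coe_algebraMap] at hb
  have haC : (P.a : ℂ) ≠ 0 := Complex.ofReal_ne_zero.mpr ha
  set u : ℝ := -P.b / P.a - 2 * x.re with hu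
  have hxc : x + y = ((2 * x.re : ℝ) : ℂ) := by rw [hy]; exact_mod_cast Complex.add_conj x
  have hz : z = (u : ℂ) := by
    have h1 : z = -((P.b : ℂ) / (P.a : ℂ)) - (x + y) := by
      field_simp
      linear_combination hb
    rw [h1, hxc, hu]
    push_cast
    ring
  have hd := Cubic.discr_eq_prod_three_roots ha h3
  simp only [Complex.coe_algebraMap] at hd
  have hxy : x - y = ((2 * x.im : ℝ) : ℂ) * Complex.I := by rw [hy]; exact_mod_cast Complex.sub_conj x
  have hxz : (x - z) * (y - z) = ((Complex.normSq (x - (u : ℂ)) : ℝ) : ℂ) := by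
    rw [hz, hy, ← Complex.mul_conj (x - (u : ℂ))]
    congr 1
    rw [map_sub, Complex.conj_ofReal]
  have key : ((P.discr : ℝ) : ℂ) =
      ((-((P.a * P.a * (2 * x.im) * Complex.normSq (x - (u : ℂ))) ^ 2) : ℝ) : ℂ) := by
    rw [hd, show (P.a : ℂ) * (P.a : ℂ) * (x - y) * (x - z) * (y - z)
        = (P.a : ℂ) * (P.a : ℂ) * (x - y) * ((x - z) * (y - z)) by ring, hxy, hxz]
    push_cast
    linear_combination (((P.a : ℂ) * P.a * (2 * x.im) * Complex.normSq (x - (u:ℂ))) ^ 2) *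
      Complex.I_sq
  have key2 : P.discr = -((P.a * P.a * (2 * x.im) * Complex.normSq (x - (u : ℂ))) ^ 2) := by
    exact_mod_cast key
  rw [key2]
  simp [sq_nonneg]

private lemma perm12 (x y z : ℂ) : ({x, y, z} : Multiset ℂ) = {y, x, z} :=
  Multiset.cons_swap x y {z}

private lemma perm23 (x y z : ℂ) : ({x, y, z} : Multiset ℂ) = {x, z, y} :=
  congrArg (x ::ₘ ·) (Multiset.cons_swap y z 0)

private lemma disc_nonpos_of_im_ne {P : Cubic ℝ} (ha : P.a ≠ 0) {x y z : ℂ}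
    (h3 : (Cubic.map (algebraMap ℝ ℂ) P).roots = {x, y, z})
    (hx : x.im ≠ 0) : P.discr ≤ 0 := by
  have hxm : x ∈ (Cubic.map (algebraMap ℝ ℂ) P).roots := by
    rw [h3]; simp
  have hmem := conj_root_mem ha hxm
  rw [h3] at hmem
  have hxx : (starRingEnd ℂ) x ≠ x := fun h => hx (Complex.conj_eq_iff_im.mp h)
  simp only [Multiset.insert_eq_cons, Multiset.mem_cons, Multiset.mem_singleton] at hmem
  rcases hmem with h | h | h
  · exact absurd h hxx
  · exact disc_nonpos_of_conj ha h3 h.symm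
  · exact disc_nonpos_of_conj ha (h3.trans (perm23 x y z)) h.symm

private lemma cubic_three_real_roots {P : Cubic ℝ} (ha : P.a ≠ 0) (hd : 0 < P.discr) :
    ∃ p q r : ℝ, p ≠ q ∧ p ≠ r ∧ q ≠ r ∧ P.toPoly.roots = {p, q, r} := by
  obtain ⟨x, y, z, h3⟩ := (Cubic.splits_iff_roots_eq_three (φ := algebraMap ℝ ℂ) ha).mp
    (IsAlgClosed.splits _)
  have hne := (Cubic.discr_ne_zero_iff_roots_ne ha h3).mp hd.ne'
  have hx : x.im = 0 := by
    by_contra h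
    exact absurd (disc_nonpos_of_im_ne ha h3 h) (not_le.mpr hd)
  have hy : y.im = 0 := by
    by_contra h
    exact absurd (disc_nonpos_of_im_ne ha (h3.trans (perm12 x y z)) h) (not_le.mpr hd)
  have hz : z.im = 0 := by
    by_contra h
    exact absurd (disc_nonpos_of_im_ne ha
      (h3.trans ((perm23 x y z).trans (perm12 x z y))) h) (not_le.mpr hd)
  refine ⟨x.re, y.re, z.re, ?_, ?_, ?_, ?_⟩
  · intro h; exact hne.1 (Complex.ext h (hx.trans hy.symm))
  · intro h; exact hne.2.1 (Complex.ext h (hx.trans hz.symm))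
  · intro h; exact hne.2.2 (Complex.ext h (hy.trans hz.symm))
  · -- realize the real roots
    have hxe : x = ((x.re : ℝ) : ℂ) := (Complex.ext (by simp) (by simp [hx])).symm
    have hye : y = ((y.re : ℝ) : ℂ) := (Complex.ext (by simp) (by simp [hy])).symm
    have hze : z = ((z.re : ℝ) : ℂ) := (Complex.ext (by simp) (by simp [hz])).symm
    rw [hxe, hye, hze] at h3 hne
    have h0 : P.toPoly ≠ 0 := Cubic.ne_zero_of_a_ne_zero ha
    have hpq : x.re ≠ y.re := fun h => hne.1 (by exact_mod_cast h)
    have hpr : x.re ≠ z.re := fun h => hne.2.1 (by exact_mod_cast h)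
    have hqr : y.re ≠ z.re := fun h => hne.2.2 (by exact_mod_cast h)
    have hroot : ∀ w : ℝ, w ∈ ({x.re, y.re, z.re} : Multiset ℝ) → P.toPoly.IsRoot w := by
      intro w hw
      refine real_root_of_mem ha ?_
      rw [h3]
      simp only [Multiset.insert_eq_cons, Multiset.mem_cons, Multiset.mem_singleton] at hw ⊢
      rcases hw with h | h | h
      · exact Or.inl (by rw [h])
      · exact Or.inr (Or.inl (by rw [h]))
      · exact Or.inr (Or.inr (by rw [h]))
    have hnodup : ({x.re, y.re, z.re} : Multiset ℝ).Nodup := by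
      simp [Multiset.nodup_cons, hpq, hpr, hqr]
    have hle : ({x.re, y.re, z.re} : Multiset ℝ) ≤ P.toPoly.roots := by
      rw [Multiset.le_iff_count]
      intro a
      by_cases hmem : a ∈ ({x.re, y.re, z.re} : Multiset ℝ)
      · have h1 : Multiset.count a ({x.re, y.re, z.re} : Multiset ℝ) = 1 :=
          Multiset.count_eq_one_of_mem hnodup hmem
        rw [h1, count_roots]
        exact (rootMultiplicity_pos h0).mpr (hroot a hmem)
      · rw [Multiset.count_eq_zero_of_notMem hmem]
        exact Nat.zero_le _
    have hcard : Multiset.card P.toPoly.roots ≤ 3 := by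
      have := card_roots' P.toPoly
      rwa [Cubic.natDegree_of_a_ne_zero ha] at this
    exact (Multiset.eq_of_le_of_card_le hle (by simpa using hcard)).symm



private lemma cubic_eq_factored {a b c d k r s : ℝ} (h1 : a = k)
    (h2 : b = k * (-(2 * r + s))) (h3 : c = k * (r ^ 2 + 2 * r * s))
    (h4 : d = -(k * (r ^ 2 * s))) :
    C a * X ^ 3 + C b * X ^ 2 + C c * X + C d = C k * ((X - C r) ^ 2 * (X - C s)) := by
  subst h1; subst h2; subst h3; subst h4
  simp only [C_mul, C_neg, C_add, C_pow, map_ofNat]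
  ring

private lemma factored_ne_zero {k r s : ℝ} (hk : k ≠ 0) :
    C k * ((X - C r) ^ 2 * (X - C s)) ≠ 0 :=
  mul_ne_zero (fun h => hk (by simpa using h))
    (mul_ne_zero (pow_ne_zero 2 (X_sub_C_ne_zero r)) (X_sub_C_ne_zero s))

private lemma factored_roots {k r s : ℝ} (hk : k ≠ 0) :
    (C k * ((X - C r) ^ 2 * (X - C s))).roots = {r, r, s} := by
  rw [roots_C_mul _ hk,
    roots_mul (mul_ne_zero (pow_ne_zero 2 (X_sub_C_ne_zero r)) (X_sub_C_ne_zero s)),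
    roots_pow, roots_X_sub_C, roots_X_sub_C]
  rfl

private lemma factored_mult_r {k r s : ℝ} (hk : k ≠ 0) (hrs : r ≠ s) :
    rootMultiplicity r (C k * ((X - C r) ^ 2 * (X - C s))) = 2 := by
  rw [← count_roots, factored_roots hk]
  simp [Multiset.count_cons, Multiset.count_singleton, hrs]

private lemma factored_mult_s {k r s : ℝ} (hk : k ≠ 0) (hrs : r ≠ s) :
    rootMultiplicity s (C k * ((X - C r) ^ 2 * (X - C s))) = 1 := by
  rw [← count_roots, factored_roots hk]
  simp [Multiset.count_cons, Multiset.count_singleton, Ne.symm hrs]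

private lemma factored_root_mem {k r s w : ℝ}
    (hw : (C k * ((X - C r) ^ 2 * (X - C s))).IsRoot w) (hk : k ≠ 0) : w = r ∨ w = s := by
  have h1 : k * ((w - r) ^ 2 * (w - s)) = 0 := by
    simpa [Polynomial.IsRoot, eval_mul, eval_pow, eval_sub, eval_C, eval_X] using hw
  rcases mul_eq_zero.mp h1 with h | h
  · exact absurd h hk
  rcases mul_eq_zero.mp h with h | h
  · left; have := pow_eq_zero_iff (n := 2) (by norm_num) |>.mp h; linarith
  · right; linarith

private lemma cubic_root_pos {a b c d x : ℝ} (ha : a < 0) (hb : 0 < b) (hc : c ≤ 0)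
    (hd : 0 < d) (h : a * x ^ 3 + b * x ^ 2 + c * x + d = 0) : 0 < x := by
  by_contra hx
  push_neg at hx
  have hx3 : x ^ 3 ≤ 0 := by nlinarith [sq_nonneg x]
  nlinarith [mul_nonneg (neg_nonneg.mpr ha.le) (neg_nonneg.mpr hx3),
    mul_nonneg hb.le (sq_nonneg x),
    mul_nonneg (neg_nonneg.mpr hc) (neg_nonneg.mpr hx)]

private lemma cubic_exists_pos_root {a b c d : ℝ} (ha : a < 0) (hd : 0 < d) :
    ∃ t : ℝ, 0 < t ∧ (C a * X ^ 3 + C b * X ^ 2 + C c * X + C d).IsRoot t := by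
  set B := |b| + |c| + |d| with hB
  set M := (B + 1) / (-a) + 1 with hM
  have hBnn : 0 ≤ B := by positivity
  have hdiv : 0 ≤ (B + 1) / -a := div_nonneg (by linarith) (by linarith)
  have hM1 : 1 ≤ M := by rw [hM]; linarith
  have hM0 : 0 < M := lt_of_lt_of_le one_pos hM1
  have hane : a ≠ 0 := ha.ne
  have hkey : a * M = -(B + 1) + a := by
    have h0 : a * ((B + 1) / -a) = -(B + 1) := by
      rw [mul_comm, div_mul_eq_mul_div, div_neg, mul_div_assoc, div_self hane, mul_one]
    calc a * M = a * ((B + 1) / -a) + a := by rw [hM]; ring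
      _ = -(B + 1) + a := by rw [h0]
  have h2 : a * M + B ≤ -1 := by linarith
  have e1 : b * M ^ 2 ≤ |b| * M ^ 2 := mul_le_mul_of_nonneg_right (le_abs_self b) (sq_nonneg M)
  have e2 : c * M ≤ |c| * M ^ 2 := by
    nlinarith [mul_le_mul_of_nonneg_right (le_abs_self c) hM0.le,
      mul_nonneg (abs_nonneg c) (mul_nonneg (by linarith : (0:ℝ) ≤ M - 1) hM0.le)]
  have e3 : d ≤ |d| * M ^ 2 := by
    nlinarith [le_abs_self d, mul_nonneg (abs_nonneg d)
      (mul_nonneg (by linarith : (0:ℝ) ≤ M - 1) (by linarith : (0:ℝ) ≤ M + 1))]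
  have h4 : (0 : ℝ) ≤ (-1 - (a * M + B)) * M ^ 2 :=
    mul_nonneg (by linarith) (sq_nonneg M)
  have hval : a * M ^ 3 + b * M ^ 2 + c * M + d < 0 := by
    nlinarith [mul_pos hM0 hM0]
  have hcont : ContinuousOn (fun x : ℝ => (C a * X ^ 3 + C b * X ^ 2 + C c * X + C d).eval x)
      (Set.Icc 0 M) := ((C a * X ^ 3 + C b * X ^ 2 + C c * X + C d).continuous).continuousOn
  have hmem : (0 : ℝ) ∈ Set.Ioo ((C a * X ^ 3 + C b * X ^ 2 + C c * X + C d).eval M)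
      ((C a * X ^ 3 + C b * X ^ 2 + C c * X + C d).eval 0) := by
    constructor
    · simpa [eval_add, eval_mul, eval_pow, eval_C, eval_X] using hval
    · simpa [eval_add, eval_mul, eval_pow, eval_C, eval_X] using hd
  obtain ⟨t, ht, ht0⟩ := intermediate_value_Ioo' hM0.le hcont hmem
  exact ⟨t, ht.1, ht0⟩

private lemma disc_formula (η : ℝ) :
    (⟨1024 * (η - 3), -704 * η ^ 2 + 1920 * η + 768,
      η * (196 * η ^ 2 - 732 * η + 288), 27 * η ^ 2⟩ : Cubic ℝ).discr
      = 196608 * η ^ 3 * (49 * η ^ 2 - 135 * η - 12) * (5 * η - 12) ^ 2 *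
        (7 * η - 20) ^ 2 * (3 - η) := by
  show (-704 * η ^ 2 + 1920 * η + 768) ^ 2 * (η * (196 * η ^ 2 - 732 * η + 288)) ^ 2 -
      4 * (1024 * (η - 3)) * (η * (196 * η ^ 2 - 732 * η + 288)) ^ 3 -
      4 * (-704 * η ^ 2 + 1920 * η + 768) ^ 3 * (27 * η ^ 2) -
      27 * (1024 * (η - 3)) ^ 2 * (27 * η ^ 2) ^ 2 +
      18 * (1024 * (η - 3)) * (-704 * η ^ 2 + 1920 * η + 768) *
        (η * (196 * η ^ 2 - 732 * η + 288)) * (27 * η ^ 2) = _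
  ring


end

set_option maxHeartbeats 2000000 in


open Polynomial in
/-- Real-root structure of the cubic
`g(ρ) = 1024(η − 3)ρ³ + (−704η² + 1920η + 768)ρ² + η(196η² − 732η + 288)ρ + 27η²`,
with `η̄ = 135/98 + (19/98)√57`: for `η ∈ (0, η̄)`, `η ≠ 12/5`, it has exactly one real
root, which is positive; for `η ∈ (η̄, 3)` or `η = 12/5`, it has three real roots
counted with multiplicity (with a double root exactly when `η = 12/5` or `η = 20/7`),
all positive; for `η = η̄` it has exactly one simple and one double real root,
both positive. -/
theorem cubic_g_real_roots (η : ℝ) :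
    let g : Polynomial ℝ :=
      C (1024 * (η - 3)) * X ^ 3 + C (-704 * η ^ 2 + 1920 * η + 768) * X ^ 2 +
        C (η * (196 * η ^ 2 - 732 * η + 288)) * X + C (27 * η ^ 2)
    let η' : ℝ := 135/98 + (19/98) * Real.sqrt 57
    ((0 < η ∧ η < η' ∧ η ≠ 12/5) →
      ∃ t, 0 < t ∧ g.IsRoot t ∧ ∀ s, g.IsRoot s → s = t) ∧
    (((η' < η ∧ η < 3) ∨ η = 12/5) →
      (g.roots.card = 3 ∧ (∀ x ∈ g.roots, 0 < x) ∧
        ((∃ x : ℝ, Polynomial.rootMultiplicity x g = 2) ↔ (η = 12/5 ∨ η = 20/7)))) ∧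
    (η = η' →
      ∃ a b, 0 < a ∧ 0 < b ∧ a ≠ b ∧
        Polynomial.rootMultiplicity a g = 1 ∧ Polynomial.rootMultiplicity b g = 2 ∧
        ∀ s, g.IsRoot s → s = a ∨ s = b) := by
  intro g η'
  have h57 : Real.sqrt 57 ^ 2 = 57 := Real.sq_sqrt (by norm_num)
  have h57nn : (0:ℝ) ≤ Real.sqrt 57 := Real.sqrt_nonneg 57
  have h57gt : (7.5:ℝ) < Real.sqrt 57 := by nlinarith
  have h57lt : Real.sqrt 57 < 7.56 := by nlinarith
  set P : Cubic ℝ := ⟨1024 * (η - 3), -704 * η ^ 2 + 1920 * η + 768,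
    η * (196 * η ^ 2 - 732 * η + 288), 27 * η ^ 2⟩ with hP
  have hdisc : P.discr = 196608 * η ^ 3 * (49 * η ^ 2 - 135 * η - 12) * (5 * η - 12) ^ 2 *
      (7 * η - 20) ^ 2 * (3 - η) := disc_formula η
  refine ⟨?_, ?_, ?_⟩
  · -- Part 1 : 0 < η < η', η ≠ 12/5
    rintro ⟨hη0, hηu, hη12⟩
    have hηu' : η < 135/98 + (19/98) * Real.sqrt 57 := hηu
    have hη3 : η < 3 := by nlinarith
    have ha_neg : P.a < 0 := by show 1024 * (η - 3) < 0; linarith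
    have haP : P.a ≠ 0 := ha_neg.ne
    have f2 : 49 * η ^ 2 - 135 * η - 12 < 0 := by
      have hA : (0:ℝ) < 135 + 19 * Real.sqrt 57 - 98 * η := by nlinarith
      have hB : (0:ℝ) < 19 * Real.sqrt 57 + 98 * η - 135 := by nlinarith
      nlinarith [mul_pos hA hB, h57]
    have h5 : (5 * η - 12) ≠ 0 := fun h => hη12 (by linarith)
    have f3 : 0 < (5 * η - 12) ^ 2 := lt_of_le_of_ne (sq_nonneg _) (Ne.symm (pow_ne_zero 2 h5))
    have h7 : (7 * η - 20) ≠ 0 := by intro h; nlinarith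
    have f4 : 0 < (7 * η - 20) ^ 2 := lt_of_le_of_ne (sq_nonneg _) (Ne.symm (pow_ne_zero 2 h7))
    have f5 : (0:ℝ) < 3 - η := by linarith
    have f1 : (0:ℝ) < 196608 * η ^ 3 := mul_pos (by norm_num) (pow_pos hη0 3)
    have hdneg : P.discr < 0 := by
      calc P.discr = (196608 * η ^ 3 * (5 * η - 12) ^ 2 * (7 * η - 20) ^ 2 * (3 - η)) *
          (49 * η ^ 2 - 135 * η - 12) := by rw [hdisc]; ring
        _ < 0 := mul_neg_of_pos_of_neg (mul_pos (mul_pos (mul_pos f1 f3) f4) f5) f2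
    obtain ⟨t, ht0, htroot⟩ := cubic_exists_pos_root
      (a := 1024 * (η - 3)) (b := -704 * η ^ 2 + 1920 * η + 768)
      (c := η * (196 * η ^ 2 - 732 * η + 288)) (d := 27 * η ^ 2)
      (by linarith) (mul_pos (by norm_num) (pow_pos hη0 2))
    exact ⟨t, ht0, htroot, fun s hs => cubic_disc_neg_unique haP hdneg hs htroot⟩
  · -- Part 2
    intro h2
    have hη'lb : (12/5 : ℝ) < 135/98 + (19/98) * Real.sqrt 57 := by nlinarith
    rcases h2 with ⟨hη'lt, hη3⟩ | h125
    · -- η' < η < 3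
      have hη'lt' : 135/98 + (19/98) * Real.sqrt 57 < η := hη'lt
      have hη0 : (0:ℝ) < η := by nlinarith
      have hη2 : (2:ℝ) < η := by nlinarith
      by_cases h20 : η = 20/7
      · -- explicit factorization at η = 20/7
        have hfac : g = C ((-1024)/7 : ℝ) * ((X - C (5/4 : ℝ)) ^ 2 * (X - C (27/28 : ℝ))) := by
          show C (1024 * (η - 3)) * X ^ 3 + C (-704 * η ^ 2 + 1920 * η + 768) * X ^ 2 +
            C (η * (196 * η ^ 2 - 732 * η + 288)) * X + C (27 * η ^ 2) = _
          rw [h20]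
          exact cubic_eq_factored (by norm_num) (by norm_num) (by norm_num) (by norm_num)
        refine ⟨by rw [hfac, factored_roots (by norm_num)]; rfl, ?_, ?_⟩
        · intro x hx
          rw [hfac, factored_roots (by norm_num)] at hx
          simp only [Multiset.insert_eq_cons, Multiset.mem_cons, Multiset.mem_singleton] at hx
          rcases hx with rfl | rfl | rfl <;> norm_num
        · constructor
          · intro _; right; exact h20
          · intro _
            exact ⟨5/4, by rw [hfac]; exact factored_mult_r (by norm_num) (by norm_num)⟩
      · -- generic case : disc > 0
        have ha_neg : P.a < 0 := by show 1024 * (η - 3) < 0; linarith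
        have haP : P.a ≠ 0 := ha_neg.ne
        have f2 : 0 < 49 * η ^ 2 - 135 * η - 12 := by
          have hA : (0:ℝ) < 98 * η - 135 - 19 * Real.sqrt 57 := by nlinarith
          have hB : (0:ℝ) < 98 * η - 135 + 19 * Real.sqrt 57 := by nlinarith
          nlinarith [mul_pos hA hB, h57]
        have f3 : 0 < (5 * η - 12) ^ 2 := pow_pos (by nlinarith) 2
        have h7 : (7 * η - 20) ≠ 0 := fun h => h20 (by linarith)
        have f4 : 0 < (7 * η - 20) ^ 2 := lt_of_le_of_ne (sq_nonneg _) (Ne.symm (pow_ne_zero 2 h7))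
        have f5 : (0:ℝ) < 3 - η := by linarith
        have f1 : (0:ℝ) < 196608 * η ^ 3 := mul_pos (by norm_num) (pow_pos hη0 3)
        have hdpos : 0 < P.discr := by
          calc (0:ℝ) < (196608 * η ^ 3 * (5 * η - 12) ^ 2 * (7 * η - 20) ^ 2 * (3 - η)) *
              (49 * η ^ 2 - 135 * η - 12) :=
                mul_pos (mul_pos (mul_pos (mul_pos f1 f3) f4) f5) f2
            _ = P.discr := by rw [hdisc]; ring
        obtain ⟨p, q, r, hpq, hpr, hqr, hroots⟩ := cubic_three_real_roots haP hdpos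
        have hgroots : g.roots = {p, q, r} := hroots
        refine ⟨by rw [hgroots]; rfl, ?_, ?_⟩
        · intro x hx
          have hx' : P.a * x ^ 3 + P.b * x ^ 2 + P.c * x + P.d = 0 :=
            (Cubic.mem_roots_iff (Cubic.ne_zero_of_a_ne_zero haP) x).mp
              (show x ∈ P.roots from hx)
          have hb : (0:ℝ) < -704 * η ^ 2 + 1920 * η + 768 := by
            nlinarith [mul_pos hη0 (show (0:ℝ) < 3 - η by linarith)]
          have hcf : η * (196 * η ^ 2 - 732 * η + 288) ≤ 0 := by
            have : 196 * η ^ 2 - 732 * η + 288 < 0 := by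
              nlinarith [mul_pos hη0 (show (0:ℝ) < 3 - η by linarith)]
            exact (mul_neg_of_pos_of_neg hη0 this).le
          exact cubic_root_pos (show (1024 * (η - 3) : ℝ) < 0 by linarith) hb hcf
            (mul_pos (by norm_num) (pow_pos hη0 2)) hx'
        · constructor
          · rintro ⟨x, hm⟩
            exfalso
            have hcnt : Multiset.count x g.roots = 2 := by rw [count_roots]; exact hm
            rw [hgroots] at hcnt
            have hnd : ({p, q, r} : Multiset ℝ).Nodup := by
              simp [Multiset.nodup_cons, hpq, hpr, hqr]
            have := Multiset.nodup_iff_count_le_one.mp hnd x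
            omega
          · rintro (h | h)
            · exact absurd h (by intro hh; rw [hh] at hη'lt'; nlinarith)
            · exact absurd h h20
    · -- η = 12/5
      have hfac : g = C ((-3072)/5 : ℝ) * ((X - C (9/20 : ℝ)) ^ 2 * (X - C (5/4 : ℝ))) := by
        show C (1024 * (η - 3)) * X ^ 3 + C (-704 * η ^ 2 + 1920 * η + 768) * X ^ 2 +
          C (η * (196 * η ^ 2 - 732 * η + 288)) * X + C (27 * η ^ 2) = _
        rw [h125]
        exact cubic_eq_factored (by norm_num) (by norm_num) (by norm_num) (by norm_num)
      refine ⟨by rw [hfac, factored_roots (by norm_num)]; rfl, ?_, ?_⟩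
      · intro x hx
        rw [hfac, factored_roots (by norm_num)] at hx
        simp only [Multiset.insert_eq_cons, Multiset.mem_cons, Multiset.mem_singleton] at hx
        rcases hx with rfl | rfl | rfl <;> norm_num
      · constructor
        · intro _; left; exact h125
        · intro _
          exact ⟨9/20, by rw [hfac]; exact factored_mult_r (by norm_num) (by norm_num)⟩
  · -- Part 3 : η = η'
    intro hη
    have hηv : η = 135/98 + (19/98) * Real.sqrt 57 := hη
    have hk : (1024 * (η - 3) : ℝ) ≠ 0 := by rw [hηv]; nlinarith
    have hrs : ((9 + Real.sqrt 57)/16 : ℝ) ≠ (7911 + 1035 * Real.sqrt 57)/12544 := by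
      intro h
      nlinarith [h]
    have hfac : g = C (1024 * (η - 3)) *
        ((X - C ((9 + Real.sqrt 57)/16 : ℝ)) ^ 2 *
          (X - C ((7911 + 1035 * Real.sqrt 57)/12544 : ℝ))) := by
      show C (1024 * (η - 3)) * X ^ 3 + C (-704 * η ^ 2 + 1920 * η + 768) * X ^ 2 +
        C (η * (196 * η ^ 2 - 732 * η + 288)) * X + C (27 * η ^ 2) = _
      refine cubic_eq_factored rfl ?_ ?_ ?_
      · rw [hηv]
        linear_combination (722/49 : ℝ) * h57
      · rw [hηv]
        linear_combination ((-206307/9604 : ℝ) - (13395/9604) * Real.sqrt 57) * h57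
      · rw [hηv]
        linear_combination ((1511217/307328 : ℝ) + (169857/153664) * Real.sqrt 57 +
          (19665/307328) * Real.sqrt 57 ^ 2) * h57
    refine ⟨(7911 + 1035 * Real.sqrt 57)/12544, (9 + Real.sqrt 57)/16,
      by positivity, by positivity, ?_, ?_, ?_, ?_⟩
    · intro h; exact hrs h.symm
    · rw [hfac]; exact factored_mult_s hk hrs
    · rw [hfac]; exact factored_mult_r hk hrs
    · intro s hs
      rw [hfac] at hs
      rcases factored_root_mem hs hk with h | h
      · exact Or.inr h
      · exact Or.inl h
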